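/- Let k ≥ 0 be an integer, q > 1/3, c > 0, and let z : ℝ → ℂ be a function with |z(t)| ≥ c|t|^q for all sufficiently large |t|. For each t let v(t) = (z(t), 0, −16t, 0, 0, …) be the sequence with first entry z(t), third entry −16t, and all other entries 0. Then k! · S_k(v(t)) / z(t)^k → 1 as |t| → ∞. -/

import Mathlib

open scoped BigOperators

/-- Elementary Schur polynomial `S_k(x)` for a sequence `x = (x_1, x_2, …)`
(indexed so that `x j` is the `j`-th entry, `j ≥ 1`), defined by the
generating-function identity `∑ S_k(x) ε^k = exp (∑_{n≥1} x_n ε^n)`;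
explicitly, `S_k(x) = ∑_{partitions p of k} ∏_i x_i^{m_i(p)} / m_i(p)!`. -/
noncomputable def schurS (k : ℕ) (x : ℕ → ℂ) : ℂ :=
  ∑ p : Nat.Partition k,
    ∏ i ∈ p.parts.toFinset,
      x i ^ (p.parts.count i) / (Nat.factorial (p.parts.count i) : ℂ)

open Filter

/-- The partition of `k` into `k` ones. -/
def onesPartition (k : ℕ) : Nat.Partition k :=
  ⟨Multiset.replicate k 1, by
      intro i hi
      rw [Multiset.eq_of_mem_replicate hi]; norm_num,
    by simp⟩

/-- If `|z(t)| ≥ c|t|^q` (with `q > 1/3`) for all large `|t|`,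
and `v(t) = (z(t), 0, −16t, 0, 0, …)`, then `k! S_k(v(t))/z(t)^k → 1` as `|t| → ∞`. -/
theorem schurS_asymptotics (k : ℕ) (q c : ℝ) (hq : 1 / 3 < q) (hc : 0 < c)
    (z : ℝ → ℂ)
    (hz : ∃ T : ℝ, ∀ t : ℝ, T ≤ |t| → c * |t| ^ q ≤ ‖z t‖) :
    Filter.Tendsto
      (fun t : ℝ => (Nat.factorial k : ℂ)
          * schurS k (fun n => if n = 1 then z t else if n = 3 then (-16 * t : ℂ) else 0)
          / z t ^ k)
      (Filter.cocompact ℝ) (nhds 1) := by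
  classical
  obtain ⟨T, hT⟩ := hz
  have habs : Tendsto (fun t : ℝ => |t|) (cocompact ℝ) atTop := by
    exact (tendsto_norm_cocompact_atTop (E := ℝ)).congr (fun t => Real.norm_eq_abs t)
  have hev : ∀ᶠ t : ℝ in cocompact ℝ, max T 1 ≤ |t| := habs.eventually_ge_atTop _
  have hbase : ∀ᶠ t : ℝ in cocompact ℝ,
      c ≤ ‖z t‖ ∧ c * |t| ^ q ≤ ‖z t‖ ∧ 1 ≤ |t| := by
    filter_upwards [hev] with t ht
    have h1 : (1:ℝ) ≤ |t| := le_trans (le_max_right _ _) ht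
    have hzt := hT t (le_trans (le_max_left _ _) ht)
    have hr1 : (1:ℝ) ≤ |t| ^ q := by
      calc (1:ℝ) = (1:ℝ) ^ q := (Real.one_rpow q).symm
        _ ≤ |t| ^ q := Real.rpow_le_rpow zero_le_one h1 (by linarith)
    exact ⟨le_trans (by nlinarith) hzt, hzt, h1⟩
  -- summand for a partition p
  set g : Nat.Partition k → ℝ → ℂ := fun p t =>
    (Nat.factorial k : ℂ) *
      (∏ i ∈ p.parts.toFinset,
        (if i = 1 then z t else if i = 3 then (-16 * t : ℂ) else 0) ^ (p.parts.count i)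
          / (Nat.factorial (p.parts.count i) : ℂ)) / z t ^ k with hg
  have key : ∀ p : Nat.Partition k,
      Tendsto (g p) (cocompact ℝ)
        (nhds (if p = onesPartition k then (1:ℂ) else 0)) := by
    intro p
    by_cases hgood : ∀ i ∈ p.parts, i = 1 ∨ i = 3
    · -- all parts are 1 or 3
      set a := p.parts.count 1 with ha
      set m := p.parts.count 3 with hm
      have hparts : p.parts = Multiset.replicate a 1 + Multiset.replicate m 3 := by
        ext i
        rw [Multiset.count_add, Multiset.count_replicate, Multiset.count_replicate]
        by_cases h1 : i = 1
        · subst h1; simp [ha]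
        · by_cases h3 : i = 3
          · subst h3; simp [hm]
          · have hni : i ∉ p.parts := fun h => by rcases hgood i h with h | h <;> simp_all
            rw [Multiset.count_eq_zero.2 hni, if_neg (fun h => h1 h.symm),
              if_neg (fun h => h3 h.symm), add_zero]
      have hk : k = a + 3 * m := by
        have hs := p.parts_sum
        rw [hparts, Multiset.sum_add, Multiset.sum_replicate, Multiset.sum_replicate] at hs
        simp [smul_eq_mul] at hs
        omega
      have hprod : ∀ t : ℝ,
          (∏ i ∈ p.parts.toFinset,
            (if i = 1 then z t else if i = 3 then (-16 * t : ℂ) else 0) ^ (p.parts.count i)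
              / (Nat.factorial (p.parts.count i) : ℂ))
          = z t ^ a / (Nat.factorial a : ℂ)
              * ((-16 * t : ℂ) ^ m / (Nat.factorial m : ℂ)) := by
        intro t
        have hsub : p.parts.toFinset ⊆ ({1, 3} : Finset ℕ) := by
          intro i hi
          rcases hgood i (Multiset.mem_toFinset.1 hi) with h | h <;> simp [h]
        rw [Finset.prod_subset hsub ?_]
        · rw [Finset.prod_pair (by norm_num : (1:ℕ) ≠ 3)]
          norm_num [← ha, ← hm]
        · intro i _ hni
          have hc0 : p.parts.count i = 0 := by
            rw [Multiset.count_eq_zero]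
            exact fun h => hni (Multiset.mem_toFinset.2 h)
          simp [hc0]
      by_cases hm0 : m = 0
      · -- p is the all-ones partition
        have hp1 : p = onesPartition k := by
          apply Nat.Partition.ext
          rw [hparts, hm0]
          have : a = k := by omega
          simp [this, onesPartition]
        rw [if_pos hp1]
        have heq : (fun _ : ℝ => (1:ℂ)) =ᶠ[cocompact ℝ] g p := by
          filter_upwards [hbase] with t ⟨hc1, _, _⟩
          have hzne : z t ≠ 0 := by
            intro h
            rw [h] at hc1; simp at hc1; linarith
          have hfac : (Nat.factorial k : ℂ) ≠ 0 := by
            exact_mod_cast Nat.cast_ne_zero.2 (Nat.factorial_ne_zero k)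
          have hka : a = k := by omega
          rw [hg]
          simp only [hprod t, hm0, hka]
          field_simp
          simp
        exact Tendsto.congr' heq tendsto_const_nhds
      · -- m ≥ 1 : term tends to 0
        have hpne : p ≠ onesPartition k := by
          intro h
          have h3 : (3:ℕ) ∈ p.parts := by
            rw [← Multiset.count_pos, ← hm]; omega
          rw [h] at h3
          have := Multiset.eq_of_mem_replicate
            (show (3:ℕ) ∈ Multiset.replicate k 1 from h3)
          omega
        rw [if_neg hpne]
        set D : ℝ := (Nat.factorial k : ℝ) * 16 ^ m / (Nat.factorial a * Nat.factorial m) with hD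
        set C : ℝ := D / c ^ (3 * m) with hC
        set e : ℝ := (m : ℝ) - 3 * (q * m) with he
        have hepos : 0 < 3 * (q * m) - m := by
          have hm1 : (1:ℝ) ≤ m := by exact_mod_cast Nat.one_le_iff_ne_zero.2 hm0
          nlinarith
        have hBtend : Tendsto (fun t : ℝ => C * |t| ^ e) (cocompact ℝ) (nhds 0) := by
          have h1 : Tendsto (fun s : ℝ => s ^ e) atTop (nhds 0) := by
            have h2 := tendsto_rpow_neg_atTop hepos
            have he' : e = -(3 * (q * m) - m) := by rw [he]; ring
            rw [he']; exact h2
          have := (h1.const_mul C).comp habs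
          rw [mul_zero] at this; exact this
        apply squeeze_zero_norm' ?_ hBtend
        filter_upwards [hbase] with t ⟨hc1, hczq, h1t⟩
        have htpos : (0:ℝ) < |t| := lt_of_lt_of_le one_pos h1t
        have hApos : (0:ℝ) < ‖z t‖ := lt_of_lt_of_le hc hc1
        set A : ℝ := ‖z t‖ with hA
        have habs16 : ‖(-16 * t : ℂ)‖ = 16 * |t| := by
          have h16 : (-16 * (t:ℂ)) = ((-16 * t : ℝ) : ℂ) := by push_cast; ring
          rw [h16, Complex.norm_real, Real.norm_eq_abs, abs_mul]; norm_num
        have hnorm : ‖g p t‖ = (Nat.factorial k : ℝ) *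
            (A ^ a / (Nat.factorial a : ℝ) * ((16 * |t|) ^ m / (Nat.factorial m : ℝ)))
            / A ^ k := by
          rw [hg]
          simp only [hprod t]
          simp only [norm_div, norm_mul, norm_pow, habs16, Complex.norm_natCast, ← hA]
        have hzne : A ≠ 0 := ne_of_gt hApos
        have hfa : (Nat.factorial a : ℝ) ≠ 0 := by exact_mod_cast Nat.factorial_ne_zero a
        have hfm : (Nat.factorial m : ℝ) ≠ 0 := by exact_mod_cast Nat.factorial_ne_zero m
        have hAk : A ^ k = A ^ a * A ^ (3 * m) := by rw [hk, pow_add]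
        have hLHS : ‖g p t‖ = D * (|t| ^ m / A ^ (3 * m)) := by
          rw [hnorm, hAk, hD]
          field_simp
          ring
        have hA3m : c ^ (3*m) * |t| ^ (3 * (q * m)) ≤ A ^ (3*m) := by
          have h1 : (c * |t| ^ q) ^ (3*m) ≤ A ^ (3*m) :=
            pow_le_pow_left₀ (by positivity) hczq _
          calc c ^ (3*m) * |t| ^ (3 * (q * m))
              = (c * |t| ^ q) ^ (3*m) := by
                rw [mul_pow]
                congr 1
                rw [← Real.rpow_natCast (|t| ^ q) (3*m), ← Real.rpow_mul (abs_nonneg t)]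
                congr 1; push_cast; ring
            _ ≤ A ^ (3*m) := h1
        have hDpos : 0 < D := by
          rw [hD]; positivity
        rw [hLHS]
        have hstep : |t| ^ m / A ^ (3*m) ≤ |t| ^ m / (c ^ (3*m) * |t| ^ (3 * (q * m))) := by
          apply div_le_div_of_nonneg_left (by positivity) (by positivity) hA3m
        calc D * (|t| ^ m / A ^ (3*m))
            ≤ D * (|t| ^ m / (c ^ (3*m) * |t| ^ (3 * (q * m)))) :=
              mul_le_mul_of_nonneg_left hstep hDpos.le
          _ = C * |t| ^ e := by
              rw [hC, he]
              rw [← Real.rpow_natCast |t| m, Real.rpow_sub htpos]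
              field_simp
    · -- some part is neither 1 nor 3 : the term is identically 0
      push_neg at hgood
      obtain ⟨i, hi, hi13⟩ := hgood
      have hi1 : i ≠ 1 := hi13.1
      have hi3 : i ≠ 3 := hi13.2
      have hpne : p ≠ onesPartition k := by
        intro h
        rw [h] at hi
        exact hi1 (Multiset.eq_of_mem_replicate
          (show i ∈ Multiset.replicate k 1 from hi))
      rw [if_neg hpne]
      have hzero : ∀ t : ℝ, g p t = 0 := by
        intro t
        rw [hg]
        have : (∏ j ∈ p.parts.toFinset,
            (if j = 1 then z t else if j = 3 then (-16 * t : ℂ) else 0) ^ (p.parts.count j)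
              / (Nat.factorial (p.parts.count j) : ℂ)) = 0 := by
          apply Finset.prod_eq_zero (Multiset.mem_toFinset.2 hi)
          have hcount : p.parts.count i ≠ 0 := by
            simpa [Multiset.count_eq_zero] using hi
          simp [hi1, hi3, zero_pow hcount]
        simp only [this, mul_zero, zero_div]
      exact Tendsto.congr (fun t => (hzero t).symm) tendsto_const_nhds
  have htot : Tendsto (fun t : ℝ => ∑ p : Nat.Partition k, g p t) (cocompact ℝ)
      (nhds (∑ p : Nat.Partition k, if p = onesPartition k then (1:ℂ) else 0)) :=
    tendsto_finset_sum _ (fun p _ => key p)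
  have hsumval : (∑ p : Nat.Partition k, if p = onesPartition k then (1:ℂ) else 0) = 1 := by
    rw [Finset.sum_ite_eq' Finset.univ (onesPartition k)]
    simp
  rw [hsumval] at htot
  apply htot.congr
  intro t
  rw [schurS, Finset.mul_sum, Finset.sum_div]
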